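/- For k = 2 there is an exact sequence 0 → 𝒮_2(Γ) → M_2(Γ) →(∂) B_2(Γ) →(θ) R → 0, where θ is the linear map sending λ{α} to λ; i.e., ∂ has kernel 𝒮_2(Γ), the image of ∂ equals the kernel of θ, and θ is surjective. -/

import Mathlib

open scoped MatrixGroups LinearAlgebra.Projectivization Classical
open Matrix MvPolynomial NumberField

set_option maxHeartbeats 1000000
set_option synthInstance.maxHeartbeats 200000

noncomputable section

namespace Bianchi

/-- `K` is (isomorphic to) the imaginary quadratic field `ℚ(√-d)` for some
`d ∈ {1,2,3,7,11}`, i.e. a Euclidean imaginary quadratic field. -/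
def IsEuclideanImagQuad (K : Type) [Field K] [NumberField K] : Prop :=
  ∃ d : ℕ, d ∈ ({1, 2, 3, 7, 11} : Set ℕ) ∧
    ∃ α : K, α ^ 2 = -(d : K) ∧ Algebra.adjoin ℚ {α} = ⊤

variable (K : Type) [Field K] [NumberField K]

/-- 2×2 matrices with entries in `A`. -/
abbrev Mat2 (A : Type*) := Matrix (Fin 2) (Fin 2) A

/-- The map on matrices induced by the inclusion `𝓞 K → K`. -/
def ιm : Mat2 (𝓞 K) → Mat2 K := fun M => M.map (algebraMap (𝓞 K) K)

/-- The projective line `P¹(K)`, whose points are the cusps. -/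
abbrev P1 := ℙ K (Fin 2 → K)

/-- Action of a nonsingular `K`-matrix on `P¹(K)` (acting on column vectors);
junk value (the identity) for singular matrices. -/
def mAct (A : Mat2 K) : P1 K → P1 K :=
  if h : Function.Injective (Matrix.toLin' A) then
    Projectivization.map (Matrix.toLin' A) h else id

/-- The cusp `0 = 0/1 = [0 : 1]`. -/
def c0 : P1 K := Projectivization.mk K ![0, 1]
  (by intro h; have := congrFun h 1; simp at this)

/-- The cusp `∞ = 1/0 = [1 : 0]`. -/
def cInf : P1 K := Projectivization.mk K ![1, 0]
  (by intro h; have := congrFun h 0; simp at this)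

variable (R : Type) [CommRing R] [Algebra (𝓞 K) R] (k : ℕ)

/-- `R_{k-2}[X,Y]`, the space of homogeneous polynomials of degree `k - 2` in two
variables `X, Y` over `R`, presented by the coefficient vectors with respect to the
monomial basis `X^i Y^(k-2-i)`, `0 ≤ i ≤ k-2`. -/
abbrev Poly := Fin (k - 1) → R

/-- The exponent function of the `i`-th basis monomial `X^i Y^(k-2-i)` of `R_{k-2}[X,Y]`. -/
def expo (i : Fin (k - 1)) : Fin 2 →₀ ℕ :=
  Finsupp.single 0 (i : ℕ) + Finsupp.single 1 (k - 2 - (i : ℕ))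

/-- Interpret a coefficient vector as the homogeneous polynomial
`∑ i, P i • X^i Y^(k-2-i)`. -/
def toPoly : Poly R k →ₗ[R] MvPolynomial (Fin 2) R :=
  ∑ i : Fin (k - 1), (monomial (expo k i)).comp (LinearMap.proj i)

/-- Extract the coefficient vector of a homogeneous polynomial of degree `k-2`. -/
def ofPoly : MvPolynomial (Fin 2) R →ₗ[R] Poly R k :=
  LinearMap.pi (fun i => lcoeff R (expo k i))

/-- The pair of degree-one forms `(dX - bY, -cX + aY)` attached to `g = (a b; c d)`. -/
def substVec (g : Mat2 (𝓞 K)) : Fin 2 → MvPolynomial (Fin 2) R :=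
  ![C (algebraMap (𝓞 K) R (g 1 1)) * X 0 - C (algebraMap (𝓞 K) R (g 0 1)) * X 1,
    -(C (algebraMap (𝓞 K) R (g 1 0)) * X 0) + C (algebraMap (𝓞 K) R (g 0 0)) * X 1]

/-- The substitution `P(X,Y) ↦ P(dX - bY, -cX + aY)` for `g = (a b; c d)`. -/
def substMat (g : Mat2 (𝓞 K)) : MvPolynomial (Fin 2) R →ₐ[R] MvPolynomial (Fin 2) R :=
  aeval (substVec K R g)

/-- The right action `P ↦ P|_g = P(dX - bY, -cX + aY)` of a matrix `g` over `𝓞 K`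
on `R_{k-2}[X,Y]` (substitution preserves homogeneity, so this is computed by
passing to polynomials, substituting, and taking coefficients again). -/
def polyAct (g : Mat2 (𝓞 K)) : Poly R k →ₗ[R] Poly R k :=
  (ofPoly R k) ∘ₗ (substMat K R g).toLinearMap ∘ₗ (toPoly R k)

/-- Evaluation `P(x₀, x₁)` of `P ∈ R_{k-2}[X,Y]` at a pair of elements of `R`. -/
def pevalR (P : Poly R k) (x : Fin 2 → R) : R := MvPolynomial.eval x (toPoly R k P)

end Bianchi
namespace Bianchi

variable (K : Type) [Field K] [NumberField K]
variable (R : Type) [CommRing R] [Algebra (𝓞 K) R] (k : ℕ)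
variable (Γ : Subgroup (SL(2, 𝓞 K)))

/-- The relations defining boundary modular symbols: `x|_γ = x` for `γ ∈ Γ`. -/
def bsRel : Submodule R (P1 K →₀ Poly R k) :=
  Submodule.span R {x | ∃ (γ : SL(2, 𝓞 K)) (_ : γ ∈ Γ) (α : P1 K) (P : Poly R k),
    x = Finsupp.single (mAct K (ιm K γ.1) α) (polyAct K R k γ.1 P) - Finsupp.single α P}

/-- The boundary modular symbols `B_k(Γ)` of weight `k` and level `Γ`. -/
abbrev BS := (P1 K →₀ Poly R k) ⧸ bsRel K R k Γ

/-- The boundary modular symbol `P ⊗ {α}`. -/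
def bsym (α : P1 K) (P : Poly R k) : BS K R k Γ :=
  Submodule.Quotient.mk (Finsupp.single α P)

/-- The free module underlying modular symbols. -/
abbrev MSfree := (P1 K × P1 K) →₀ Poly R k

/-- The relations defining modular symbols: `{α,α} = 0`,
`{α,β} + {β,γ} + {γ,α} = 0`, and `x|_γ = x` for `γ ∈ Γ`. -/
def msRel : Submodule R (MSfree K R k) :=
  Submodule.span R
    ({x | ∃ (α : P1 K) (P : Poly R k), x = Finsupp.single (α, α) P} ∪
     {x | ∃ (α β γ : P1 K) (P : Poly R k),
        x = Finsupp.single (α, β) P + Finsupp.single (β, γ) P + Finsupp.single (γ, α) P} ∪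
     {x | ∃ (γ : SL(2, 𝓞 K)) (_ : γ ∈ Γ) (α β : P1 K) (P : Poly R k),
        x = Finsupp.single (mAct K (ιm K γ.1) α, mAct K (ιm K γ.1) β) (polyAct K R k γ.1 P)
          - Finsupp.single (α, β) P})

/-- The modular symbols `M_k(Γ)` of weight `k` and level `Γ`. -/
abbrev MS := MSfree K R k ⧸ msRel K R k Γ

/-- The modular symbol `P ⊗ {α, β}`. -/
def msym (α β : P1 K) (P : Poly R k) : MS K R k Γ :=
  Submodule.Quotient.mk (Finsupp.single (α, β) P)

/-- The boundary map on the free modules, `P ⊗ {α,β} ↦ P ⊗ {β} - P ⊗ {α}`. -/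
def bdFree : MSfree K R k →ₗ[R] (P1 K →₀ Poly R k) :=
  Finsupp.lsum ℕ (fun p : P1 K × P1 K =>
    (Finsupp.lsingle p.2 - Finsupp.lsingle p.1 : Poly R k →ₗ[R] (P1 K →₀ Poly R k)))

lemma bdFree_rel : msRel K R k Γ ≤ (bsRel K R k Γ).comap (bdFree K R k) := by
  rw [msRel, Submodule.span_le]
  rintro x ((⟨α, P, rfl⟩ | ⟨α, β, γ, P, rfl⟩) | ⟨γ, hγ, α, β, P, rfl⟩) <;>
    simp only [SetLike.mem_coe, Submodule.mem_comap, map_add, map_sub, bdFree,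
      Finsupp.lsum_single, LinearMap.sub_apply, Finsupp.lsingle_apply]
  · simpa using (bsRel K R k Γ).zero_mem
  · have h0 : (Finsupp.single β P - Finsupp.single α P)
        + (Finsupp.single γ P - Finsupp.single β P)
        + (Finsupp.single α P - Finsupp.single γ P) = (0 : P1 K →₀ Poly R k) := by abel
    rw [h0]
    exact (bsRel K R k Γ).zero_mem
  · have h1 : (Finsupp.single (mAct K (ιm K γ.1) β) (polyAct K R k γ.1 P)
        - Finsupp.single β P) ∈ bsRel K R k Γ :=
      Submodule.subset_span ⟨γ, hγ, β, P, rfl⟩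
    have h2 : (Finsupp.single (mAct K (ιm K γ.1) α) (polyAct K R k γ.1 P)
        - Finsupp.single α P) ∈ bsRel K R k Γ :=
      Submodule.subset_span ⟨γ, hγ, α, P, rfl⟩
    have h3 := Submodule.sub_mem _ h1 h2
    convert h3 using 1
    abel

/-- The boundary map `∂ : M_k(Γ) → B_k(Γ)`. -/
def bd : MS K R k Γ →ₗ[R] BS K R k Γ :=
  Submodule.mapQ _ _ (bdFree K R k) (bdFree_rel K R k Γ)

/-- The cuspidal modular symbols `𝒮_k(Γ) = ker ∂`. -/
def Scusp : Submodule R (MS K R k Γ) := LinearMap.ker (bd K R k Γ)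

/-- The Manin symbol `[P, g] = P|_g ⊗ {g·0, g·∞}`, for an arbitrary matrix `g` over `𝓞`. -/
def maninSymM (P : Poly R k) (A : Mat2 (𝓞 K)) : MS K R k Γ :=
  msym K R k Γ (mAct K (ιm K A) (c0 K)) (mAct K (ιm K A) (cInf K)) (polyAct K R k A P)

end Bianchi
namespace Bianchi

section ThetaMap

variable (K : Type) [Field K] [NumberField K]
variable (R : Type) [CommRing R] [Algebra (𝓞 K) R]
variable (Γ : Subgroup (SL(2, 𝓞 K)))

lemma polyAct_weight_two (g : Mat2 (𝓞 K)) (P : Poly R 2) : polyAct K R 2 g P = P := by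
  funext i
  have hi : i = 0 := Fin.ext (by omega)
  subst hi
  have hexpo : expo 2 (0 : Fin (2 - 1)) = 0 := by
    simp [expo]
  simp [polyAct, ofPoly, toPoly, LinearMap.pi_apply, hexpo, Fin.sum_univ_one,
    MvPolynomial.monomial_zero', substMat, MvPolynomial.aeval_C]

/-- `θ` on the free module: `λ ⊗ {α} ↦ λ` (in weight `2` the coefficient module
`R_0[X,Y]` is `R` itself). -/
def thetaFree : (P1 K →₀ Poly R 2) →ₗ[R] R :=
  Finsupp.lsum ℕ (fun _ : P1 K => (LinearMap.proj (0 : Fin (2 - 1)) : Poly R 2 →ₗ[R] R))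

/-- The linear map `θ : B_2(Γ) → R` sending `λ{α}` to `λ`. -/
def theta : BS K R 2 Γ →ₗ[R] R :=
  Submodule.liftQ (bsRel K R 2 Γ) (thetaFree K R) (by
    rw [bsRel, Submodule.span_le]
    rintro x ⟨γ, hγ, α, P, rfl⟩
    have h1 : ∀ (β : P1 K) (Q : Poly R 2), thetaFree K R (Finsupp.single β Q) = Q 0 := by
      intro β Q; simp [thetaFree]
    simp [LinearMap.mem_ker, map_sub, h1, polyAct_weight_two])

end ThetaMap

section AuxExact

variable (K : Type) [Field K] [NumberField K]
variable (R : Type) [CommRing R] [Algebra (𝓞 K) R]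
variable (Γ : Subgroup (SL(2, 𝓞 K)))

lemma thetaFree_single (β : P1 K) (Q : Poly R 2) :
    thetaFree K R (Finsupp.single β Q) = Q 0 := by simp [thetaFree]

lemma thetaFree_bdFree (f : MSfree K R 2) : thetaFree K R (bdFree K R 2 f) = 0 := by
  induction f using Finsupp.induction_linear with
  | zero => simp
  | add f g hf hg => rw [map_add, map_add, hf, hg, add_zero]
  | single p P =>
      simp [bdFree, thetaFree_single]

lemma theta_mk (f : P1 K →₀ Poly R 2) :
    theta K R Γ (Submodule.Quotient.mk f) = thetaFree K R f := rfl

lemma bd_mk (f : MSfree K R 2) :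
    bd K R 2 Γ (Submodule.Quotient.mk f) = Submodule.Quotient.mk (bdFree K R 2 f) :=
  Submodule.mapQ_apply _ _ _ f

lemma poly2_eq_zero (P : Poly R 2) (h : P 0 = 0) : P = 0 := by
  funext i
  have : i = 0 := Fin.ext (by omega)
  rw [this, h]; rfl

lemma bdFree_section (f : P1 K →₀ Poly R 2) (hf : thetaFree K R f = 0) :
    bdFree K R 2 (f.sum fun α P => Finsupp.single (cInf K, α) P) = f := by
  rw [map_finsuppSum]
  have h1 : (f.sum fun α P => bdFree K R 2 (Finsupp.single (cInf K, α) P))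
      = f.sum fun α P => Finsupp.single α P - Finsupp.single (cInf K) P := by
    apply Finsupp.sum_congr
    intro α _
    simp [bdFree]
  rw [h1, Finsupp.sum_sub]
  have h2 : (f.sum fun α P => (Finsupp.single α P : P1 K →₀ Poly R 2)) = f :=
    Finsupp.sum_single f
  have h3 : (f.sum fun α P => (Finsupp.single (cInf K) P : P1 K →₀ Poly R 2))
      = Finsupp.single (cInf K) (f.sum fun _ P => P) := by
    classical
    rw [Finsupp.sum, Finsupp.sum, Finsupp.single_finset_sum]
  have h4 : (f.sum fun _ P => P) = (0 : Poly R 2) := by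
    apply poly2_eq_zero
    have : thetaFree K R f = f.sum fun _ P => P 0 := rfl
    rw [this] at hf
    rw [Finsupp.sum_apply']
    exact hf
  rw [h2, h3, h4, Finsupp.single_zero, sub_zero]

end AuxExact

/-- For `k = 2` there is an exact sequence
`0 → 𝒮_2(Γ) → M_2(Γ) → B_2(Γ) → R → 0`: the boundary map `∂` has kernel `𝒮_2(Γ)`,
its image is the kernel of `θ : λ{α} ↦ λ`, and `θ` is surjective. -/
theorem exact_sequence_weight_two
    (K : Type) [Field K] [NumberField K] (hK : IsEuclideanImagQuad K)
    (R : Type) [CommRing R] [Algebra (𝓞 K) R] [Nontrivial R]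
    (Γ : Subgroup (SL(2, 𝓞 K))) (hΓ : Γ.FiniteIndex) :
    LinearMap.ker (bd K R 2 Γ) = Scusp K R 2 Γ
    ∧ LinearMap.range (bd K R 2 Γ) = LinearMap.ker (theta K R Γ)
    ∧ Function.Surjective (theta K R Γ) := by
  refine ⟨rfl, ?_, ?_⟩
  · apply le_antisymm
    · rintro x ⟨m, rfl⟩
      obtain ⟨f, rfl⟩ := Submodule.Quotient.mk_surjective _ m
      rw [LinearMap.mem_ker, bd_mk, theta_mk, thetaFree_bdFree]
    · intro b hb
      obtain ⟨f, rfl⟩ := Submodule.Quotient.mk_surjective _ b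
      rw [LinearMap.mem_ker, theta_mk] at hb
      refine ⟨Submodule.Quotient.mk (f.sum fun α P => Finsupp.single (cInf K, α) P), ?_⟩
      rw [bd_mk, bdFree_section K R f hb]
  · intro r
    refine ⟨Submodule.Quotient.mk (Finsupp.single (cInf K) (fun _ => r)), ?_⟩
    rw [theta_mk, thetaFree_single]

end Bianchi
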